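/- For any two matrices U ∈ ℂ^{m×p} and V ∈ ℂ^{q×m}, the matrix E := U(VU)†V satisfies R(E) = R(U) ∩ ((UU*)†(R(U) ∩ N(V)))⊥, where (UU*)†(S) denotes the image of the subspace S under the linear map given by the matrix (UU*)† and ⊥ denotes orthogonal complement in ℂ^m. -/

import Mathlib

open Matrix

lemma euc_mul {a b c : ℕ} (A : Matrix (Fin a) (Fin b) ℂ) (B : Matrix (Fin b) (Fin c) ℂ) :
    Matrix.toEuclideanLin (A * B) =
      (Matrix.toEuclideanLin A).comp (Matrix.toEuclideanLin B) := by
  apply LinearMap.ext; intro x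
  simp [Matrix.toEuclideanLin_apply, Matrix.mulVec_mulVec]

lemma inner_euc {a b : ℕ} (M : Matrix (Fin a) (Fin b) ℂ) (x : EuclideanSpace ℂ (Fin b))
    (y : EuclideanSpace ℂ (Fin a)) :
    (inner ℂ (Matrix.toEuclideanLin M x) y : ℂ) = inner ℂ x (Matrix.toEuclideanLin Mᴴ y) := by
  rw [Matrix.toEuclideanLin_conjTranspose_eq_adjoint, LinearMap.adjoint_inner_right]

lemma orth_range {a b : ℕ} (M : Matrix (Fin a) (Fin b) ℂ) :
    (LinearMap.range (Matrix.toEuclideanLin M))ᗮ = LinearMap.ker (Matrix.toEuclideanLin Mᴴ) := by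
  ext x
  simp only [Submodule.mem_orthogonal, LinearMap.mem_ker]
  constructor
  · intro h
    have h2 := h (Matrix.toEuclideanLin M (Matrix.toEuclideanLin Mᴴ x)) ⟨_, rfl⟩
    rw [inner_euc] at h2
    exact inner_self_eq_zero.mp h2
  · rintro h y ⟨c, rfl⟩
    rw [inner_euc, h, inner_zero_right]

/-- The four Penrose conditions characterizing the Moore-Penrose inverse. -/
def IsMoorePenrose {m n : ℕ} (A : Matrix (Fin m) (Fin n) ℂ)
    (X : Matrix (Fin n) (Fin m) ℂ) : Prop :=
  A * X * A = A ∧ X * A * X = X ∧ (A * X)ᴴ = A * X ∧ (X * A)ᴴ = X * A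

/-- The range (column space) of a matrix, as a subspace of Euclidean space. -/
noncomputable def mrange {m n : ℕ} (A : Matrix (Fin m) (Fin n) ℂ) :
    Submodule ℂ (EuclideanSpace ℂ (Fin m)) :=
  LinearMap.range (Matrix.toEuclideanLin A)

/-- The null space of a matrix, as a subspace of Euclidean space. -/
noncomputable def mker {m n : ℕ} (A : Matrix (Fin m) (Fin n) ℂ) :
    Submodule ℂ (EuclideanSpace ℂ (Fin n)) :=
  LinearMap.ker (Matrix.toEuclideanLin A)

/-- For any matrices `U ∈ ℂ^{m×p}` and `V ∈ ℂ^{q×m}`, the matrix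
`E = U (VU)† V` satisfies `R(E) = R(U) ∩ ((UU*)†(R(U) ∩ N(V)))⊥`. -/
theorem stmt8 {m p q : ℕ} (U : Matrix (Fin m) (Fin p) ℂ) (V : Matrix (Fin q) (Fin m) ℂ)
    (X : Matrix (Fin p) (Fin q) ℂ) (hX : IsMoorePenrose (V * U) X)
    (W : Matrix (Fin m) (Fin m) ℂ) (hW : IsMoorePenrose (U * Uᴴ) W) :
    mrange (U * X * V) =
      mrange U ⊓ (Submodule.map (Matrix.toEuclideanLin W) (mrange U ⊓ mker V))ᗮ := by
  obtain ⟨h1, h2, h3, h4⟩ := hX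
  obtain ⟨g1, _g2, _g3, _g4⟩ := hW
  -- matrix identities
  have hXVU : X * (V * U) = Uᴴ * Vᴴ * Xᴴ := by
    conv_lhs => rw [← h4]
    simp [conjTranspose_mul, Matrix.mul_assoc]
  have I1 : U * X * V = U * Uᴴ * Vᴴ * (Xᴴ * (X * V)) := by
    conv_lhs => rw [← h2, hXVU]
    simp [Matrix.mul_assoc]
  have hUV : Uᴴ * Vᴴ = X * (V * U) * (Uᴴ * Vᴴ) := by
    calc Uᴴ * Vᴴ = (V * U)ᴴ := (conjTranspose_mul V U).symm
    _ = (V * U * X * (V * U))ᴴ := by rw [h1]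
    _ = Uᴴ * Vᴴ * Xᴴ * (Uᴴ * Vᴴ) := by simp [conjTranspose_mul, Matrix.mul_assoc]
    _ = X * (V * U) * (Uᴴ * Vᴴ) := by rw [← hXVU]
  have I2 : U * Uᴴ * Vᴴ = U * X * V * (U * Uᴴ * Vᴴ) := by
    conv_lhs => rw [Matrix.mul_assoc, hUV]
    simp [Matrix.mul_assoc]
  -- reduce LHS range to range of U*Uᴴ*Vᴴ
  have hr : mrange (U * X * V) = mrange (U * Uᴴ * Vᴴ) := by
    apply le_antisymm
    · rw [mrange, mrange, I1, euc_mul]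
      exact LinearMap.range_comp_le_range _ _
    · conv_lhs => rw [mrange, I2, euc_mul]
      exact LinearMap.range_comp_le_range _ _
  rw [hr]
  -- notation
  set u := Matrix.toEuclideanLin U with hu
  set v := Matrix.toEuclideanLin V with hv
  set a := Matrix.toEuclideanLin (U * Uᴴ) with ha
  set w := Matrix.toEuclideanLin W with hw
  set vh := Matrix.toEuclideanLin Vᴴ with hvh
  have hherm : (U * Uᴴ)ᴴ = U * Uᴴ := by simp [conjTranspose_mul]
  -- self-adjointness of a
  have hsa : ∀ x y : EuclideanSpace ℂ (Fin m), (inner ℂ (a x) y : ℂ) = inner ℂ x (a y) := by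
    intro x y
    rw [ha, inner_euc, hherm]
  -- a ∘ w ∘ a = a pointwise
  have haw : ∀ x, a (w (a x)) = a x := by
    intro x
    have : Matrix.toEuclideanLin (U * Uᴴ * W * (U * Uᴴ)) x
        = Matrix.toEuclideanLin (U * Uᴴ) x := by rw [g1]
    rwa [euc_mul, euc_mul] at this
  have hawb : ∀ b ∈ LinearMap.range a, a (w b) = b := by
    rintro b ⟨t, rfl⟩; exact haw t
  -- ker a = (range a)ᗮ
  have hkera : (LinearMap.range a)ᗮ = LinearMap.ker a := by
    rw [ha, orth_range, hherm]
  -- range u = range a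
  have hru : LinearMap.range u = LinearMap.range a := by
    have hk : LinearMap.ker (Matrix.toEuclideanLin Uᴴ) = LinearMap.ker a := by
      ext x
      simp only [LinearMap.mem_ker]
      constructor
      · intro h
        rw [ha, euc_mul]
        simp [h]
      · intro h
        have h5 : (inner ℂ (Matrix.toEuclideanLin Uᴴ x) (Matrix.toEuclideanLin Uᴴ x) : ℂ) = 0 := by
          rw [← inner_euc, ← hu]
          have : u (Matrix.toEuclideanLin Uᴴ x) = a x := by rw [ha, euc_mul]; rfl
          rw [this, h, inner_zero_left]
        exact inner_self_eq_zero.mp h5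
    calc LinearMap.range u = ((LinearMap.range u)ᗮ)ᗮ :=
          (Submodule.orthogonal_orthogonal _).symm
    _ = ((LinearMap.range a)ᗮ)ᗮ := by rw [hu, orth_range, hk, hkera]
    _ = LinearMap.range a := Submodule.orthogonal_orthogonal _
  -- range vh = (ker v)ᗮ
  have hrvh : LinearMap.range vh = (LinearMap.ker v)ᗮ := by
    have : (LinearMap.range vh)ᗮ = LinearMap.ker v := by
      rw [hvh, orth_range, conjTranspose_conjTranspose, hv]
    rw [← this, Submodule.orthogonal_orthogonal]
  -- rewrite goal
  have hUUV : mrange (U * Uᴴ * Vᴴ) = Submodule.map a (LinearMap.range vh) := by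
    rw [mrange, euc_mul, LinearMap.range_comp, ha, hvh]
  rw [hUUV, hrvh]
  have hgU : mrange U = LinearMap.range a := by rw [mrange, ← hu, hru]
  rw [hgU]
  have hgV : mker V = LinearMap.ker v := rfl
  rw [hgV]
  set S : Submodule ℂ (EuclideanSpace ℂ (Fin m)) := LinearMap.range a ⊓ LinearMap.ker v with hS
  apply le_antisymm
  · rintro _ ⟨y, hy, rfl⟩
    have hy' : y ∈ (LinearMap.ker v)ᗮ := hy
    have key : a y ∈ (Submodule.map w S)ᗮ := by
      rw [Submodule.mem_orthogonal]
      rintro _ ⟨b, hb, rfl⟩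
      rw [← hsa, hawb b (Submodule.mem_inf.mp hb).1]
      exact Submodule.inner_right_of_mem_orthogonal (Submodule.mem_inf.mp hb).2 hy'
    exact ⟨⟨y, rfl⟩, key⟩
  · rintro x ⟨hx1, hx2⟩
    obtain ⟨t, rfl⟩ := hx1
    have hx2' : a t ∈ (Submodule.map w S)ᗮ := hx2
    have ht : t ∈ Sᗮ := by
      rw [Submodule.mem_orthogonal]
      intro b hb
      have h6 := (Submodule.mem_orthogonal _ _).mp hx2' (w b) ⟨b, hb, rfl⟩
      rwa [← hsa, hawb b (Submodule.mem_inf.mp hb).1] at h6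
    have hdecomp : Sᗮ = (LinearMap.range a)ᗮ ⊔ (LinearMap.ker v)ᗮ := by
      rw [hS]
      calc (LinearMap.range a ⊓ LinearMap.ker v)ᗮ
          = ((((LinearMap.range a)ᗮ)ᗮ) ⊓ (((LinearMap.ker v)ᗮ)ᗮ))ᗮ := by
            rw [Submodule.orthogonal_orthogonal, Submodule.orthogonal_orthogonal]
      _ = (((LinearMap.range a)ᗮ ⊔ (LinearMap.ker v)ᗮ)ᗮ)ᗮ := by
            rw [Submodule.inf_orthogonal]
      _ = (LinearMap.range a)ᗮ ⊔ (LinearMap.ker v)ᗮ := Submodule.orthogonal_orthogonal _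
    rw [hdecomp] at ht
    obtain ⟨α, hα, β, hβ, rfl⟩ := Submodule.mem_sup.mp ht
    have hα0 : a α = 0 := by
      rw [hkera] at hα
      exact hα
    exact ⟨β, hβ, by rw [map_add, hα0, zero_add]⟩
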